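/- Let R be a semilocal commutative ring (a ring having only finitely many maximal ideals). Then the following are equivalent: (1) R is a Bézout ring; (2) R is (R∖P)-Bézout for every prime ideal P of R; (3) R is (R∖M)-Bézout for every maximal ideal M of R. -/

import Mathlib

/-- An ideal `I` of a commutative ring `R` is `S`-principal if there exist `s ∈ S`
and `a ∈ R` such that `sI ⊆ aR ⊆ I`. -/
def Ideal.IsSPrincipal {R : Type*} [CommRing R] (S : Set R) (I : Ideal R) : Prop :=
  ∃ s ∈ S, ∃ a : R, (∀ x ∈ I, s * x ∈ Ideal.span {a}) ∧ Ideal.span {a} ≤ I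

/-- A commutative ring `R` is `S`-Bézout if every finitely generated ideal of `R`
is `S`-principal. -/
def IsSBezout (R : Type*) [CommRing R] (S : Set R) : Prop :=
  ∀ I : Ideal R, I.FG → I.IsSPrincipal S

/-- Determinant trick: if `v * I ≤ A + M*I` with `I` f.g., `A ≤ I`, `M` prime and
`v ∉ M`, then there is `u ∉ M` with `u * I ≤ A`. -/
lemma aux_det_trick {R : Type*} [CommRing R] {M A I : Ideal R} (hM : M.IsPrime)
    (hfg : I.FG) (hAI : A ≤ I) {v : R} (hv : v ∉ M)
    (hvI : ∀ x ∈ I, v * x ∈ A ⊔ M * I) :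
    ∃ u, u ∉ M ∧ ∀ x ∈ I, u * x ∈ A := by
  classical
  set A' : Submodule R I := Submodule.comap I.subtype A with hA'
  haveI : Module.Finite R I := Module.Finite.iff_fg.mpr hfg
  set K := I ⧸ A' with hK
  have hMIle : (M • I : Ideal R) ≤ I := by
    rw [Ideal.smul_eq_mul]; exact Ideal.mul_le_right
  -- any element of `M*I` maps into `M • ⊤` in `K`
  have hMI : ∀ w (hmem : w ∈ M * I) (hw : w ∈ I),
      A'.mkQ ⟨w, hw⟩ ∈ (M • ⊤ : Submodule R K) := by
    intro w hmem
    rw [← Ideal.smul_eq_mul] at hmem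
    induction hmem using Submodule.smul_induction_on' with
    | smul m hm x hx =>
      intro hw
      have : (⟨m • x, hw⟩ : I) = m • ⟨x, hx⟩ := rfl
      rw [this, map_smul]
      exact Submodule.smul_mem_smul hm Submodule.mem_top
    | add y hy z hz ihy ihz =>
      intro hw
      have : (⟨y + z, hw⟩ : I) = ⟨y, hMIle hy⟩ + ⟨z, hMIle hz⟩ := rfl
      rw [this, map_add]
      exact Submodule.add_mem _ (ihy _) (ihz _)
  -- multiplication by `v` on `K` lands in `M • ⊤`
  have hrange : LinearMap.range (algebraMap R (Module.End R K) v) ≤ (M • ⊤ : Submodule R K) := by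
    rintro _ ⟨k, rfl⟩
    obtain ⟨y, rfl⟩ := A'.mkQ_surjective k
    rw [Module.algebraMap_end_apply, ← map_smul]
    have hy : (v • y : I) = ⟨v * (y : R), I.mul_mem_left v y.2⟩ := rfl
    rw [hy]
    rcases Submodule.mem_sup.mp (hvI (y : R) y.2) with ⟨α, hα, w, hw, hsum⟩
    have hmem : (⟨v * (y : R), I.mul_mem_left v y.2⟩ : I)
        = ⟨α, hAI hα⟩ + ⟨w, hMIle (by rwa [Ideal.smul_eq_mul])⟩ := by
      apply Subtype.ext; exact hsum.symm
    rw [hmem, map_add]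
    have hzero : A'.mkQ ⟨α, hAI hα⟩ = 0 := by
      rw [Submodule.mkQ_apply, Submodule.Quotient.mk_eq_zero]
      exact Submodule.mem_comap.mpr hα
    rw [hzero, zero_add]
    exact hMI w hw _
  obtain ⟨p, hmonic, -, hcoeff, heval⟩ :=
    LinearMap.exists_monic_and_coeff_mem_pow_and_aeval_eq_zero_of_range_le_smul R
      (algebraMap R (Module.End R K) v) M hrange
  rw [Polynomial.aeval_algebraMap_apply_eq_algebraMap_eval] at heval
  refine ⟨p.eval v, ?_, ?_⟩
  · -- `p.eval v ∉ M`
    intro hmem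
    set n := p.natDegree with hn
    have hsub : p.eval v - v ^ n ∈ M := by
      rw [Polynomial.eval_eq_sum_range, Finset.sum_range_succ, hmonic.coeff_natDegree, one_mul,
        add_sub_cancel_right]
      refine Ideal.sum_mem _ fun i hi => ?_
      rw [Finset.mem_range] at hi
      have : p.coeff i ∈ M := by
        have h1 : p.coeff i ∈ M ^ (n - i) := hcoeff i
        have h2 : (M : Ideal R) ^ (n - i) ≤ M := Ideal.pow_le_self (by omega)
        exact h2 h1
      exact Ideal.mul_mem_right _ _ this
    have hpow : v ^ n ∈ M := by
      have := M.sub_mem hmem hsub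
      simpa using this
    rcases Nat.eq_zero_or_pos n with h0 | h0
    · rw [h0, pow_zero] at hpow
      exact hM.ne_top (Ideal.eq_top_of_isUnit_mem _ hpow isUnit_one)
    · exact hv ((hM.pow_mem_iff_mem n h0).mp hpow)
  · -- `p.eval v * I ⊆ A`
    intro x hx
    have hk : (algebraMap R (Module.End R K)) (p.eval v) (A'.mkQ ⟨x, hx⟩) = 0 := by
      rw [heval]; rfl
    rw [Module.algebraMap_end_apply, ← map_smul] at hk
    have : (p.eval v • (⟨x, hx⟩ : I)) = ⟨p.eval v * x, I.mul_mem_left _ hx⟩ := rfl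
    rw [this, Submodule.mkQ_apply, Submodule.Quotient.mk_eq_zero] at hk
    exact Submodule.mem_comap.mp hk

/-- For a semilocal ring `R` (only finitely many maximal ideals), the following are
equivalent: (1) `R` is Bézout; (2) `R` is `(R∖P)`-Bézout for every prime `P`;
(3) `R` is `(R∖M)`-Bézout for every maximal ideal `M`. -/
theorem semilocal_bezout_tfae {R : Type*} [CommRing R]
    (h : {I : Ideal R | I.IsMaximal}.Finite) :
    List.TFAE [IsBezout R,
      ∀ P : Ideal R, P.IsPrime → IsSBezout R ((↑P : Set R)ᶜ),
      ∀ M : Ideal R, M.IsMaximal → IsSBezout R ((↑M : Set R)ᶜ)] := by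
  classical
  tfae_have 1 → 2 := by
    intro h1 P hP I hI
    obtain ⟨a, ha⟩ := (h1.isPrincipal_of_FG I hI)
    rw [Ideal.submodule_span_eq] at ha
    refine ⟨1, ?_, a, ?_, ?_⟩
    · simp only [Set.mem_compl_iff, SetLike.mem_coe]
      intro h1m
      exact hP.ne_top (Ideal.eq_top_of_isUnit_mem _ h1m isUnit_one)
    · intro x hx; rw [one_mul, ← ha]; exact hx
    · rw [← ha]
  tfae_have 2 → 3 := by
    intro h2 M hM
    exact h2 M hM.isPrime
  tfae_have 3 → 1 := by
    intro h3
    constructor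
    intro I hfg
    -- choose the `S`-principal data at each maximal ideal
    have hex : ∀ M : Ideal R, M.IsMaximal → ∃ sa : R × R, sa.1 ∉ M ∧
        (∀ x ∈ I, sa.1 * x ∈ Ideal.span {sa.2}) ∧ Ideal.span {sa.2} ≤ I := by
      intro M hM
      obtain ⟨s, hs, a, h1, h2⟩ := h3 M hM I hfg
      exact ⟨(s, a), hs, h1, h2⟩
    choose! sa hsa1 hsa2 hsa3 using hex
    -- choose `t M ∉ M` lying in all other maximal ideals
    have hext : ∀ M : Ideal R, M.IsMaximal → ∃ t : R, t ∉ M ∧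
        ∀ M' : Ideal R, M'.IsMaximal → M' ≠ M → t ∈ M' := by
      intro M hM
      have hch : ∀ M' ∈ h.toFinset.erase M, ∃ c : R, c ∈ M' ∧ c ∉ M := by
        intro M' hM'
        rcases Finset.mem_erase.mp hM' with ⟨hne, hmem⟩
        have hM'max : M'.IsMaximal := h.mem_toFinset.mp hmem
        by_contra hcon
        push_neg at hcon
        have hle : M' ≤ M := fun c hc => hcon c hc
        exact hne (hM'max.eq_of_le hM.ne_top hle)
      choose c hc1 hc2 using hch
      refine ⟨∏ x ∈ (h.toFinset.erase M).attach, c x.1 x.2, ?_, ?_⟩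
      · intro hmem
        haveI := hM.isPrime
        rcases Ideal.IsPrime.prod_mem_iff.mp hmem with ⟨i, _, hi⟩
        exact hc2 i.1 i.2 hi
      · intro M' hM' hne
        have hmem : M' ∈ h.toFinset.erase M :=
          Finset.mem_erase.mpr ⟨hne, h.mem_toFinset.mpr hM'⟩
        rw [← Finset.mul_prod_erase _ _ (Finset.mem_attach _ ⟨M', hmem⟩)]
        exact Ideal.mul_mem_right _ _ (hc1 M' hmem)
    choose! t ht1 ht2 using hext
    set F := h.toFinset with hF
    set a : R := ∑ M ∈ F, t M * (sa M).2 with ha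
    set A : Ideal R := Ideal.span {a} with hA
    have haM : ∀ M : Ideal R, M.IsMaximal → (sa M).2 ∈ I := fun M hM =>
      hsa3 M hM (Ideal.mem_span_singleton_self _)
    have hAI : A ≤ I := by
      rw [hA, Ideal.span_le, Set.singleton_subset_iff]
      exact Ideal.sum_mem _ fun M hM =>
        I.mul_mem_left _ (haM M (h.mem_toFinset.mp hM))
    -- at each maximal ideal, apply the determinant trick
    have hexu : ∀ M : Ideal R, M.IsMaximal → ∃ u, u ∉ M ∧ ∀ x ∈ I, u * x ∈ A := by
      intro M hM
      refine aux_det_trick hM.isPrime hfg hAI (v := t M * (sa M).1) ?_ ?_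
      · intro hmem
        rcases hM.isPrime.mem_or_mem hmem with hm | hm
        · exact ht1 M hM hm
        · exact hsa1 M hM hm
      · intro x hx
        obtain ⟨r, hr⟩ := Ideal.mem_span_singleton.mp (hsa2 M hM x hx)
        have hMF : M ∈ F := h.mem_toFinset.mpr hM
        have hsplit : a = t M * (sa M).2 + ∑ M' ∈ F.erase M, t M' * (sa M').2 := by
          rw [ha]
          exact (Finset.add_sum_erase F (fun M' => t M' * (sa M').2) hMF).symm
        have key : t M * (sa M).1 * x
            = r * a - ∑ M' ∈ F.erase M, r * (t M' * (sa M').2) := by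
          rw [hsplit]
          rw [mul_assoc, hr]
          simp only [mul_add, Finset.mul_sum]
          ring
        rw [key, sub_eq_add_neg]
        refine Submodule.add_mem_sup (A.mul_mem_left r (Ideal.mem_span_singleton_self a)) ?_
        refine Submodule.neg_mem _ (Ideal.sum_mem _ fun M' hM' => ?_)
        rcases Finset.mem_erase.mp hM' with ⟨hne, hmem⟩
        have hM'max : M'.IsMaximal := h.mem_toFinset.mp hmem
        have htM' : t M' ∈ M := ht2 M' hM'max M hM (fun he => hne he.symm)
        exact Ideal.mul_mem_left _ r (Ideal.mul_mem_mul htM' (haM M' hM'max))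
    choose! u hu1 hu2 using hexu
    -- the colon ideal `A : I` is the whole ring
    have hcolon : A.colon I = ⊤ := by
      by_contra hne
      obtain ⟨Mx, hMx, hle⟩ := Ideal.exists_le_maximal _ hne
      refine hu1 Mx hMx (hle ?_)
      refine Submodule.mem_colon.mpr fun p hp => ?_
      rw [smul_eq_mul]
      exact hu2 Mx hMx p hp
    have hIA : I ≤ A := by
      intro x hx
      have h1 : (1 : R) ∈ A.colon I := hcolon ▸ Submodule.mem_top
      have := Submodule.mem_colon.mp h1 x hx
      rwa [one_smul] at this
    exact ⟨a, (le_antisymm hIA hAI).symm ▸ rfl⟩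
  tfae_finish
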